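/- arXiv:1811.05897 — 4 statements merged into one kernel-verified Lean document; each statement's English description precedes it below -/
import Mathlib

section
/- Let h be a real number and let d > 0 satisfy d^3 = 2hd + 2 (equivalently 2h + 2/d - d^2 = 0). Then for all u with 0 < u < 1 we have 2h + 2/(du) - d^2 u^2 ≥ d^2(1 - u^2) > 0; consequently the integrand bound 1/sqrt(2h + 2/(du) - d^2 u^2) ≤ (1/d)·1/sqrt(1-u^2) holds pointwise. -/
/-- Pointwise integrand bound for the period integral in Hill's lunar problem. -/
theorem integrand_bound (h d : ℝ) (hd : 0 < d) (hroot : d ^ 3 = 2 * h * d + 2) :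
    ∀ u : ℝ, 0 < u → u < 1 →
      (2 * h + 2 / (d * u) - d ^ 2 * u ^ 2 ≥ d ^ 2 * (1 - u ^ 2)) ∧
      (0 < d ^ 2 * (1 - u ^ 2)) ∧
      1 / Real.sqrt (2 * h + 2 / (d * u) - d ^ 2 * u ^ 2) ≤
        (1 / d) * (1 / Real.sqrt (1 - u ^ 2)) := by
  intro u hu hu1
  have h2h : 2 * h = d ^ 2 - 2 / d := by
    field_simp
    nlinarith [hroot]
  have hkey : 2 * h + 2 / (d * u) - d ^ 2 * u ^ 2 ≥ d ^ 2 * (1 - u ^ 2) := by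
    rw [h2h]
    have : 2 / (d * u) - 2 / d = (2 / d) * (1 / u - 1) := by
      field_simp
    have hge : 2 / (d * u) - 2 / d ≥ 0 := by
      rw [this]
      have h1 : (1:ℝ) / u - 1 ≥ 0 := by
        have : (1:ℝ) ≤ 1 / u := (le_div_iff₀ hu).2 (by linarith)
        linarith
      positivity
    nlinarith
  have hpos : 0 < d ^ 2 * (1 - u ^ 2) := by
    have h1u : (0:ℝ) < 1 - u ^ 2 := by nlinarith
    positivity
  refine ⟨hkey, hpos, ?_⟩
  have hsq : Real.sqrt (d ^ 2 * (1 - u ^ 2)) ≤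
      Real.sqrt (2 * h + 2 / (d * u) - d ^ 2 * u ^ 2) :=
    Real.sqrt_le_sqrt hkey
  have hsqpos : 0 < Real.sqrt (d ^ 2 * (1 - u ^ 2)) := Real.sqrt_pos.2 hpos
  have := one_div_le_one_div_of_le hsqpos hsq
  refine this.trans_eq ?_
  rw [Real.sqrt_mul (by positivity), Real.sqrt_sq hd.le]
  rw [one_div, mul_inv, ← one_div, ← one_div, one_div d]
end

section
/- For every real h, the period T* = 2∫₀^{d(h)} dz / sqrt(2h + 2/z - z^2) of the polar consecutive-collision orbit in Hill's lunar problem satisfies T* ≤ π, where d(h) is the unique positive root of z^3 - 2hz - 2 = 0. -/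
open intervalIntegral

/-- The period of the polar consecutive-collision orbit in Hill's lunar problem
is bounded by `π`: if `d` is the unique positive root of `z^3 - 2hz - 2 = 0`, then
`T* = 2 ∫₀^d dz / √(2h + 2/z - z²) ≤ π`. -/
theorem period_bound (h d : ℝ) (hd : 0 < d) (hroot : d ^ 3 - 2 * h * d - 2 = 0) :
    2 * (∫ z in (0:ℝ)..d, 1 / Real.sqrt (2 * h + 2 / z - z ^ 2)) ≤ Real.pi := by
  set f : ℝ → ℝ := fun z => 1 / Real.sqrt (2 * h + 2 / z - z ^ 2) with hf_def
  have h2h : 2 * h = d ^ 2 - 2 / d := by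
    field_simp
    nlinarith [hroot]
  by_cases hf : IntervalIntegrable f MeasureTheory.volume 0 d
  swap
  · rw [intervalIntegral.integral_undef hf]
    simpa using Real.pi_pos.le
  -- main case: show ∫₀^d f ≤ π/2
  suffices hmain : (∫ z in (0:ℝ)..d, f z) ≤ Real.pi / 2 by linarith
  -- the primitive is continuous on [0, d]
  have hcont : ContinuousOn (fun c => ∫ z in (0:ℝ)..c, f z) (Set.Icc 0 d) := by
    have := intervalIntegral.continuousOn_primitive_interval' hf
      (Set.left_mem_uIcc (a := (0:ℝ)) (b := d))
    rwa [Set.uIcc_of_le hd.le] at this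
  -- for each c ∈ [0, d), the partial integral is ≤ π/2
  have hstep : ∀ c ∈ Set.Ico (0:ℝ) d, (∫ z in (0:ℝ)..c, f z) ≤ Real.pi / 2 := by
    intro c hc
    obtain ⟨hc0, hcd⟩ := hc
    set g : ℝ → ℝ := fun z => 1 / Real.sqrt (d ^ 2 - z ^ 2) with hg_def
    -- g is continuous on [0, c]
    have hgc : ContinuousOn g (Set.Icc 0 c) := by
      apply ContinuousOn.div continuousOn_const
      · exact (Real.continuous_sqrt.comp (by fun_prop)).continuousOn
      · intro z hz
        have hz1 : z < d := lt_of_le_of_lt hz.2 hcd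
        have hz0 : 0 ≤ z := hz.1
        have : (0:ℝ) < d ^ 2 - z ^ 2 := by nlinarith
        positivity
    have hgint : IntervalIntegrable g MeasureTheory.volume 0 c :=
      hgc.intervalIntegrable_of_Icc hc0
    have hfint : IntervalIntegrable f MeasureTheory.volume 0 c := by
      apply hf.mono_set
      rw [Set.uIcc_of_le hc0, Set.uIcc_of_le hd.le]
      exact Set.Icc_subset_Icc le_rfl hcd.le
    -- f ≤ g a.e. on [0, c]
    have hle : (∫ z in (0:ℝ)..c, f z) ≤ ∫ z in (0:ℝ)..c, g z := by
      apply intervalIntegral.integral_mono_ae_restrict hc0 hfint hgint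
      have hmem := MeasureTheory.ae_restrict_mem (μ := MeasureTheory.volume)
        (measurableSet_Icc (a := (0:ℝ)) (b := c))
      have hne : ∀ᵐ z : ℝ ∂(MeasureTheory.volume.restrict (Set.Icc 0 c)), z ≠ 0 := by
        refine MeasureTheory.ae_restrict_of_ae ?_
        rw [MeasureTheory.ae_iff]
        simp only [ne_eq, not_not]
        convert Real.volume_singleton (a := (0:ℝ)) using 2
        ext x; simp
      filter_upwards [hmem, hne] with z hz hz0
      have hzpos : 0 < z := lt_of_le_of_ne hz.1 (Ne.symm hz0)
      have hzd : z < d := lt_of_le_of_lt hz.2 hcd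
      have hB : (0:ℝ) < d ^ 2 - z ^ 2 := by nlinarith
      have hAB : d ^ 2 - z ^ 2 ≤ 2 * h + 2 / z - z ^ 2 := by
        rw [h2h]
        have : 2 / d ≤ 2 / z := by
          apply div_le_div_of_nonneg_left (by norm_num) hzpos hzd.le
        linarith
      show 1 / Real.sqrt (2 * h + 2 / z - z ^ 2) ≤ 1 / Real.sqrt (d ^ 2 - z ^ 2)
      apply one_div_le_one_div_of_le (Real.sqrt_pos.mpr hB)
      exact Real.sqrt_le_sqrt hAB
    -- compute ∫₀^c g via FTC with arcsin
    have hg_val : (∫ z in (0:ℝ)..c, g z) = Real.arcsin (c / d) := by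
      have key : ∀ z ∈ Set.uIcc (0:ℝ) c,
          HasDerivAt (fun t => Real.arcsin (t / d)) (g z) z := by
        intro z hz
        rw [Set.uIcc_of_le hc0] at hz
        have hzd : z < d := lt_of_le_of_lt hz.2 hcd
        have hz0 : 0 ≤ z := hz.1
        have h1 : z / d ≠ -1 := by
          have : 0 ≤ z / d := div_nonneg hz0 hd.le
          intro hcon; rw [hcon] at this; linarith
        have h2 : z / d ≠ 1 := by
          have : z / d < 1 := (div_lt_one hd).mpr hzd
          exact ne_of_lt this
        have hda : HasDerivAt (fun t : ℝ => t / d) (1 / d) z := by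
          simpa using (hasDerivAt_id z).div_const d
        have := (Real.hasDerivAt_arcsin h1 h2).comp z hda
        refine this.congr_deriv (Eq.symm ?_)
        have hsub : (0:ℝ) < 1 - (z / d) ^ 2 := by
          have h3 : z / d < 1 := (div_lt_one hd).mpr hzd
          have h4 : 0 ≤ z / d := div_nonneg hz0 hd.le
          nlinarith
        have hsqrt : Real.sqrt (d ^ 2 - z ^ 2) = d * Real.sqrt (1 - (z / d) ^ 2) := by
          rw [show d ^ 2 - z ^ 2 = d ^ 2 * (1 - (z / d) ^ 2) by field_simp]
          rw [Real.sqrt_mul (sq_nonneg d), Real.sqrt_sq hd.le]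
        show g z = 1 / Real.sqrt (1 - (z / d) ^ 2) * (1 / d)
        rw [hg_def]
        simp only
        rw [hsqrt, one_div, mul_inv, one_div, one_div, mul_comm]
      have := intervalIntegral.integral_eq_sub_of_hasDerivAt key hgint
      rw [this]
      simp [Real.arcsin_zero]
    rw [hg_val] at hle
    exact hle.trans (Real.arcsin_le_pi_div_two _)
  -- pass to the limit c → d⁻
  have hne : (nhdsWithin d (Set.Ico 0 d)).NeBot := by
    apply mem_closure_iff_nhdsWithin_neBot.mp
    rw [closure_Ico hd.ne]
    exact ⟨hd.le, le_rfl⟩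
  have htend : Filter.Tendsto (fun c => ∫ z in (0:ℝ)..c, f z)
      (nhdsWithin d (Set.Ico 0 d)) (nhds (∫ z in (0:ℝ)..d, f z)) := by
    have hmem : d ∈ Set.Icc 0 d := ⟨hd.le, le_rfl⟩
    have := (hcont d hmem).tendsto
    exact this.mono_left (nhdsWithin_mono d Set.Ico_subset_Icc_self)
  exact le_of_tendsto htend (Filter.eventually_of_mem self_mem_nhdsWithin hstep)
end

section
/- In the Jordan algebra 𝔸_2, the associator a(x,y,z) = x(yz) - (xy)z satisfies the closed formula a(x,y,z) = (x_2 z_1 - x_1 z_2)(i_1 y_2 - i_2 y_1), for all x, y, z ∈ 𝔸_2 written as x = x_0 + i_1 x_1 + i_2 x_2, etc. -/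
open scoped BigOperators

/-- The product of the Jordan algebra `𝔸ₙ = ℝ^{n+1}`, represented as
`ℝ × (Fin n → ℝ)`: the bilinear commutative product with `1` as identity and
`i_α i_β = -δ_{αβ}`. -/
def jmul {n : ℕ} (z w : ℝ × (Fin n → ℝ)) : ℝ × (Fin n → ℝ) :=
  (z.1 * w.1 - ∑ i, z.2 i * w.2 i, fun i => z.1 * w.2 i + w.1 * z.2 i)

/-- In `𝔸₂`, the associator `a(x,y,z) = x(yz) - (xy)z` is given by the closed
formula `a(x,y,z) = (x₂z₁ - x₁z₂)(i₁y₂ - i₂y₁)`.  Here `x = x₀ + i₁x₁ + i₂x₂`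
is represented as `(x.1, x.2)` with `x.2 0 = x₁`, `x.2 1 = x₂`, etc. -/
theorem associator_formula (x y z : ℝ × (Fin 2 → ℝ)) :
    jmul x (jmul y z) - jmul (jmul x y) z =
      (x.2 1 * z.2 0 - x.2 0 * z.2 1) • ((0 : ℝ), ![y.2 1, -y.2 0]) := by
  simp only [jmul, Fin.sum_univ_two, Prod.ext_iff, Prod.smul_mk, Prod.fst_sub, Prod.snd_sub]
  constructor
  · simp only [smul_zero]; ring
  · funext i
    fin_cases i <;> simp <;> ring
end

section
/- The Belbruno transform and its stated inverse are mutually inverse where defined: for p ∈ ℝⁿ with p ≠ -1 := (-1,0,...,0) and q ∈ ℝⁿ, applying the forward map (q,p) ↦ (Q,P) given by Q_1 = ((1-‖p‖²)/2)q_1 + ⟨q,p⟩(p_1+1), Q_j = ((‖p‖²+1)/2)q_j + p_1 q_j - p_j q_1 - ⟨q,p⟩p_j (j ≥ 2), P_1 = (‖p‖²-1)/‖p+1‖², P_j = 2p_j/‖p+1‖², followed by the stated inverse map, recovers (q,p). -/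
open scoped BigOperators

namespace Belbruno

/-- Squared Euclidean norm on `ℝ³`. -/
def norm2 (v : Fin 3 → ℝ) : ℝ := ∑ i, v i ^ 2

/-- Euclidean inner product on `ℝ³`. -/
def dot (u v : Fin 3 → ℝ) : ℝ := ∑ i, u i * v i

/-- Position part of the forward Belbruno transform. -/
noncomputable def fwdQ (q p : Fin 3 → ℝ) : Fin 3 → ℝ :=
  ![((1 - norm2 p) / 2) * q 0 + dot q p * (p 0 + 1),
    ((norm2 p + 1) / 2) * q 1 + p 0 * q 1 - p 1 * q 0 - dot q p * p 1,
    ((norm2 p + 1) / 2) * q 2 + p 0 * q 2 - p 2 * q 0 - dot q p * p 2]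

/-- Momentum part of the forward Belbruno transform, a Möbius map sending `-1` to `∞`. -/
noncomputable def fwdP (p : Fin 3 → ℝ) : Fin 3 → ℝ :=
  ![(norm2 p - 1) / ((p 0 + 1) ^ 2 + p 1 ^ 2 + p 2 ^ 2),
    2 * p 1 / ((p 0 + 1) ^ 2 + p 1 ^ 2 + p 2 ^ 2),
    2 * p 2 / ((p 0 + 1) ^ 2 + p 1 ^ 2 + p 2 ^ 2)]

/-- Position part of the inverse Belbruno transform. -/
noncomputable def invq (Q P : Fin 3 → ℝ) : Fin 3 → ℝ :=
  ![((1 - norm2 P) / 2) * Q 0 + dot Q P * (P 0 - 1),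
    ((norm2 P + 1) / 2) * Q 1 - P 0 * Q 1 + P 1 * Q 0 - dot Q P * P 1,
    ((norm2 P + 1) / 2) * Q 2 - P 0 * Q 2 + P 2 * Q 0 - dot Q P * P 2]

/-- Momentum part of the inverse Belbruno transform, defined for `P ≠ 1`. -/
noncomputable def invp (P : Fin 3 → ℝ) : Fin 3 → ℝ :=
  ![(1 - norm2 P) / ((P 0 - 1) ^ 2 + P 1 ^ 2 + P 2 ^ 2),
    2 * P 1 / ((P 0 - 1) ^ 2 + P 1 ^ 2 + P 2 ^ 2),
    2 * P 2 / ((P 0 - 1) ^ 2 + P 1 ^ 2 + P 2 ^ 2)]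

section Scalar

set_option maxHeartbeats 2000000

private lemma inv_q0' (x y z a b c Q0 Q1 Q2 P0 P1 P2 D : ℝ)
    (hDdef : D = (a+1)^2+b^2+c^2) (hD0 : D ≠ 0)
    (hQ0 : Q0 = ((1 - (a^2+b^2+c^2))/2)*x + (x*a+y*b+z*c)*(a+1))
    (hQ1 : Q1 = (((a^2+b^2+c^2)+1)/2)*y + a*y - b*x - (x*a+y*b+z*c)*b)
    (hQ2 : Q2 = (((a^2+b^2+c^2)+1)/2)*z + a*z - c*x - (x*a+y*b+z*c)*c)
    (hP0 : P0 = ((a^2+b^2+c^2)-1)/D) (hP1 : P1 = 2*b/D) (hP2 : P2 = 2*c/D) :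
    ((1 - (P0^2+P1^2+P2^2))/2) * Q0 + (Q0*P0+Q1*P1+Q2*P2)*(P0-1) = x := by
  subst hQ0 hQ1 hQ2 hP0 hP1 hP2 hDdef
  field_simp
  ring

private lemma inv_q1' (x y z a b c Q0 Q1 Q2 P0 P1 P2 D : ℝ)
    (hDdef : D = (a+1)^2+b^2+c^2) (hD0 : D ≠ 0)
    (hQ0 : Q0 = ((1 - (a^2+b^2+c^2))/2)*x + (x*a+y*b+z*c)*(a+1))
    (hQ1 : Q1 = (((a^2+b^2+c^2)+1)/2)*y + a*y - b*x - (x*a+y*b+z*c)*b)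
    (hQ2 : Q2 = (((a^2+b^2+c^2)+1)/2)*z + a*z - c*x - (x*a+y*b+z*c)*c)
    (hP0 : P0 = ((a^2+b^2+c^2)-1)/D) (hP1 : P1 = 2*b/D) (hP2 : P2 = 2*c/D) :
    (((P0^2+P1^2+P2^2)+1)/2) * Q1 - P0 * Q1 + P1 * Q0 - (Q0*P0+Q1*P1+Q2*P2)*P1 = y := by
  subst hQ0 hQ1 hQ2 hP0 hP1 hP2 hDdef
  field_simp
  ring

private lemma inv_q2' (x y z a b c Q0 Q1 Q2 P0 P1 P2 D : ℝ)
    (hDdef : D = (a+1)^2+b^2+c^2) (hD0 : D ≠ 0)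
    (hQ0 : Q0 = ((1 - (a^2+b^2+c^2))/2)*x + (x*a+y*b+z*c)*(a+1))
    (hQ1 : Q1 = (((a^2+b^2+c^2)+1)/2)*y + a*y - b*x - (x*a+y*b+z*c)*b)
    (hQ2 : Q2 = (((a^2+b^2+c^2)+1)/2)*z + a*z - c*x - (x*a+y*b+z*c)*c)
    (hP0 : P0 = ((a^2+b^2+c^2)-1)/D) (hP1 : P1 = 2*b/D) (hP2 : P2 = 2*c/D) :
    (((P0^2+P1^2+P2^2)+1)/2) * Q2 - P0 * Q2 + P2 * Q0 - (Q0*P0+Q1*P1+Q2*P2)*P2 = z := by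
  subst hQ0 hQ1 hQ2 hP0 hP1 hP2 hDdef
  field_simp
  ring

private lemma inv_p0' (a b c P0 P1 P2 D : ℝ)
    (hDdef : D = (a+1)^2+b^2+c^2) (hD0 : D ≠ 0)
    (hP0 : P0 = ((a^2+b^2+c^2)-1)/D) (hP1 : P1 = 2*b/D) (hP2 : P2 = 2*c/D) :
    (1 - (P0^2+P1^2+P2^2)) / ((P0-1)^2 + P1^2 + P2^2) = a := by
  subst hP0 hP1 hP2
  have hE : (((a^2+b^2+c^2)-1)/D - 1)^2 + (2*b/D)^2 + (2*c/D)^2 = 4/D := by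
    rw [hDdef] at hD0 ⊢; field_simp; ring
  rw [hE, hDdef] at *
  field_simp
  ring

private lemma inv_p1' (a b c P0 P1 P2 D : ℝ)
    (hDdef : D = (a+1)^2+b^2+c^2) (hD0 : D ≠ 0)
    (hP0 : P0 = ((a^2+b^2+c^2)-1)/D) (hP1 : P1 = 2*b/D) (hP2 : P2 = 2*c/D) :
    2 * P1 / ((P0-1)^2 + P1^2 + P2^2) = b := by
  subst hP0 hP1 hP2
  have hE : (((a^2+b^2+c^2)-1)/D - 1)^2 + (2*b/D)^2 + (2*c/D)^2 = 4/D := by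
    rw [hDdef] at hD0 ⊢; field_simp; ring
  rw [hE, hDdef] at *
  field_simp
  ring

private lemma inv_p2' (a b c P0 P1 P2 D : ℝ)
    (hDdef : D = (a+1)^2+b^2+c^2) (hD0 : D ≠ 0)
    (hP0 : P0 = ((a^2+b^2+c^2)-1)/D) (hP1 : P1 = 2*b/D) (hP2 : P2 = 2*c/D) :
    2 * P2 / ((P0-1)^2 + P1^2 + P2^2) = c := by
  subst hP0 hP1 hP2
  have hE : (((a^2+b^2+c^2)-1)/D - 1)^2 + (2*b/D)^2 + (2*c/D)^2 = 4/D := by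
    rw [hDdef] at hD0 ⊢; field_simp; ring
  rw [hE, hDdef] at *
  field_simp
  ring

end Scalar

/-- The Belbruno transform and its stated inverse are mutually inverse where
defined: for `p ≠ (-1,0,0)`, applying the forward map `(q,p) ↦ (Q,P)` followed
by the inverse map recovers `(q,p)`. -/
theorem inverse_of_forward (q p : Fin 3 → ℝ) (hp : p ≠ ![(-1 : ℝ), 0, 0]) :
    invq (fwdQ q p) (fwdP p) = q ∧ invp (fwdP p) = p := by
  have hD : (p 0 + 1) ^ 2 + p 1 ^ 2 + p 2 ^ 2 ≠ 0 := by
    intro h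
    apply hp
    have h0 : p 0 + 1 = 0 := by
      nlinarith [sq_nonneg (p 0 + 1), sq_nonneg (p 1), sq_nonneg (p 2)]
    have h1 : p 1 = 0 := by
      nlinarith [sq_nonneg (p 0 + 1), sq_nonneg (p 1), sq_nonneg (p 2)]
    have h2 : p 2 = 0 := by
      nlinarith [sq_nonneg (p 0 + 1), sq_nonneg (p 1), sq_nonneg (p 2)]
    funext i
    fin_cases i
    · show p 0 = -1; linarith
    · exact h1
    · exact h2
  have hQ0 : fwdQ q p 0 = ((1 - (p 0^2+p 1^2+p 2^2))/2)*(q 0)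
      + (q 0*p 0+q 1*p 1+q 2*p 2)*(p 0+1) := by
    simp [fwdQ, norm2, dot, Fin.sum_univ_three]
  have hQ1 : fwdQ q p 1 = (((p 0^2+p 1^2+p 2^2)+1)/2)*(q 1) + p 0*q 1 - p 1*q 0
      - (q 0*p 0+q 1*p 1+q 2*p 2)*(p 1) := by
    simp [fwdQ, norm2, dot, Fin.sum_univ_three]
  have hQ2 : fwdQ q p 2 = (((p 0^2+p 1^2+p 2^2)+1)/2)*(q 2) + p 0*q 2 - p 2*q 0
      - (q 0*p 0+q 1*p 1+q 2*p 2)*(p 2) := by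
    simp [fwdQ, norm2, dot, Fin.sum_univ_three]
  have hP0 : fwdP p 0 = ((p 0^2+p 1^2+p 2^2)-1)/((p 0+1)^2+p 1^2+p 2^2) := by
    simp [fwdP, norm2, Fin.sum_univ_three]
  have hP1 : fwdP p 1 = 2*p 1/((p 0+1)^2+p 1^2+p 2^2) := by
    simp [fwdP, norm2, Fin.sum_univ_three]
  have hP2 : fwdP p 2 = 2*p 2/((p 0+1)^2+p 1^2+p 2^2) := by
    simp [fwdP, norm2, Fin.sum_univ_three]
  constructor
  · funext i
    fin_cases i
    · show ((1 - norm2 (fwdP p))/2) * (fwdQ q p 0)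
        + dot (fwdQ q p) (fwdP p) * (fwdP p 0 - 1) = q 0
      rw [norm2, dot, Fin.sum_univ_three, Fin.sum_univ_three]
      exact inv_q0' (q 0) (q 1) (q 2) (p 0) (p 1) (p 2) _ _ _ _ _ _ _
        rfl hD hQ0 hQ1 hQ2 hP0 hP1 hP2
    · show ((norm2 (fwdP p) + 1)/2) * (fwdQ q p 1) - fwdP p 0 * fwdQ q p 1
        + fwdP p 1 * fwdQ q p 0 - dot (fwdQ q p) (fwdP p) * fwdP p 1 = q 1
      rw [norm2, dot, Fin.sum_univ_three, Fin.sum_univ_three]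
      exact inv_q1' (q 0) (q 1) (q 2) (p 0) (p 1) (p 2) _ _ _ _ _ _ _
        rfl hD hQ0 hQ1 hQ2 hP0 hP1 hP2
    · show ((norm2 (fwdP p) + 1)/2) * (fwdQ q p 2) - fwdP p 0 * fwdQ q p 2
        + fwdP p 2 * fwdQ q p 0 - dot (fwdQ q p) (fwdP p) * fwdP p 2 = q 2
      rw [norm2, dot, Fin.sum_univ_three, Fin.sum_univ_three]
      exact inv_q2' (q 0) (q 1) (q 2) (p 0) (p 1) (p 2) _ _ _ _ _ _ _
        rfl hD hQ0 hQ1 hQ2 hP0 hP1 hP2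
  · funext i
    fin_cases i
    · show (1 - norm2 (fwdP p)) / ((fwdP p 0 - 1)^2 + (fwdP p 1)^2 + (fwdP p 2)^2) = p 0
      rw [norm2, Fin.sum_univ_three]
      exact inv_p0' (p 0) (p 1) (p 2) _ _ _ _ rfl hD hP0 hP1 hP2
    · show 2 * fwdP p 1 / ((fwdP p 0 - 1)^2 + (fwdP p 1)^2 + (fwdP p 2)^2) = p 1
      exact inv_p1' (p 0) (p 1) (p 2) _ _ _ _ rfl hD hP0 hP1 hP2
    · show 2 * fwdP p 2 / ((fwdP p 0 - 1)^2 + (fwdP p 1)^2 + (fwdP p 2)^2) = p 2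
      exact inv_p2' (p 0) (p 1) (p 2) _ _ _ _ rfl hD hP0 hP1 hP2

end Belbruno
end
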